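/- arXiv:1803.10431 — 7 statements merged into one kernel-verified Lean document; each statement's English description precedes it below -/
import Mathlib

section
/- The set of dominators of any fixed node n is totally ordered by the dominance relation: if m₁ and m₂ both dominate n, then m₁ dominates m₂ or m₂ dominates m₁. -/
variable {V : Type*}

def IsPathFrom (E : V → V → Prop) (r n : V) (p : List V) : Prop :=
  p.Chain' E ∧ p.head? = some r ∧ p.getLast? = some n

def Dominates (E : V → V → Prop) (r m n : V) : Prop :=
  ∀ p : List V, IsPathFrom E r n p → m ∈ p

def Reachable (E : V → V → Prop) (r n : V) : Prop :=
  ∃ p : List V, IsPathFrom E r n p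

/-- Split a list at the last occurrence of either `m₁` or `m₂`. -/
lemma last_occ_split (m₁ m₂ : V) (l : List V) (h₁ : m₁ ∈ l) (h₂ : m₂ ∈ l) :
    ∃ l₁ x l₂, l = l₁ ++ x :: l₂ ∧ (x = m₁ ∨ x = m₂) ∧ m₁ ∉ l₂ ∧ m₂ ∉ l₂ := by
  induction l using List.reverseRecOn with
  | nil => simp at h₁
  | append_singleton l a ih =>
    by_cases hx : a = m₁ ∨ a = m₂
    · exact ⟨l, a, [], rfl, hx, by simp, by simp⟩
    · push_neg at hx
      have h₁' : m₁ ∈ l := by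
        rcases List.mem_append.mp h₁ with h | h
        · exact h
        · simp at h; exact absurd h.symm hx.1
      have h₂' : m₂ ∈ l := by
        rcases List.mem_append.mp h₂ with h | h
        · exact h
        · simp at h; exact absurd h.symm hx.2
      obtain ⟨l₁, x, l₂, rfl, hxor, hm₁, hm₂⟩ := ih h₁' h₂'
      refine ⟨l₁, x, l₂ ++ [a], by simp, hxor, ?_, ?_⟩
      · simp [hm₁]; exact fun h => hx.1 h.symm
      · simp [hm₂]; exact fun h => hx.2 h.symm

/-- Glue a path from `r` to `x` avoiding `m` with a chain from `x` to `n` avoiding `m`. -/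
lemma key_glue (E : V → V → Prop) (r x n m : V) (S R₂ : List V)
    (hS : IsPathFrom E r x S) (hmS : m ∉ S) (hc : List.Chain' E (x :: R₂))
    (hl : (x :: R₂).getLast? = some n) (hmR : m ∉ R₂) :
    ¬ Dominates E r m n := by
  obtain ⟨hSc, hSh, hSl⟩ := hS
  intro hdom
  have hchain : List.Chain' E (S ++ R₂) := by
    refine List.isChain_append.mpr ?_
    refine ⟨hSc, (List.isChain_cons.mp hc).2, ?_⟩
    intro a ha b hb
    rw [hSl, Option.mem_def, Option.some.injEq] at ha
    subst ha
    exact (List.isChain_cons.mp hc).1 b hb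
  have hhead : (S ++ R₂).head? = some r := by
    rw [List.head?_append, hSh]; rfl
  have hlast : (S ++ R₂).getLast? = some n := by
    rcases R₂.eq_nil_or_concat with rfl | ⟨l', a, rfl⟩
    · simp at hl; simpa [hl] using hSl
    · simp only [List.concat_eq_append] at hl ⊢
      rw [show x :: (l' ++ [a]) = (x :: l') ++ [a] from rfl, List.getLast?_concat] at hl
      simp only [Option.some.injEq] at hl
      simp [hl]
  have := hdom (S ++ R₂) ⟨hchain, hhead, hlast⟩
  rcases List.mem_append.mp this with h | h
  · exact hmS h
  · exact hmR h

/-- The dominators of a fixed node are totally ordered by dominance. -/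
theorem dominators_totally_ordered (E : V → V → Prop) (r : V)
    (hreach : ∀ x : V, Reachable E r x) (n m₁ m₂ : V)
    (h1 : Dominates E r m₁ n) (h2 : Dominates E r m₂ n) :
    Dominates E r m₁ m₂ ∨ Dominates E r m₂ m₁ := by
  by_contra hcon
  push_neg at hcon
  obtain ⟨hnd1, hnd2⟩ := hcon
  simp only [Dominates, not_forall] at hnd1 hnd2
  obtain ⟨S₁, hS₁, hm₁S₁⟩ := hnd1  -- path r → m₂ avoiding m₁
  obtain ⟨S₂, hS₂, hm₂S₂⟩ := hnd2  -- path r → m₁ avoiding m₂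
  obtain ⟨R, hR⟩ := hreach n
  have hm₁R : m₁ ∈ R := h1 R hR
  have hm₂R : m₂ ∈ R := h2 R hR
  obtain ⟨R₁, x, R₂, hsplit, hxor, hm₁R₂, hm₂R₂⟩ := last_occ_split m₁ m₂ R hm₁R hm₂R
  obtain ⟨hRc, hRh, hRl⟩ := hR
  rw [hsplit] at hRc hRl
  have hc : List.Chain' E (x :: R₂) := (List.isChain_append.mp hRc).2.1
  have hl : (x :: R₂).getLast? = some n := by
    rw [List.getLast?_append] at hRl
    simpa [List.getLast?_cons] using hRl
  rcases hxor with rfl | rfl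
  · exact key_glue E r x n m₂ S₂ R₂ hS₂ hm₂S₂ hc hl hm₂R₂ h2
  · exact key_glue E r x n m₁ S₁ R₂ hS₁ hm₁S₁ hc hl hm₁R₂ h1
end

section
/- Every node n other than the entry node r has a unique immediate dominator: there exists exactly one node m that strictly dominates n and is strictly dominated by every other strict dominator of n. -/
variable {V : Type*}

def StrictDom (E : V → V → Prop) (r m n : V) : Prop :=
  m ≠ n ∧ Dominates E r m n

def ImmDom (E : V → V → Prop) (r m n : V) : Prop :=
  StrictDom E r m n ∧ ∀ m' : V, StrictDom E r m' n → m' ≠ m → StrictDom E r m' m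

section Aux

variable {E : V → V → Prop} {r n : V}

/-- Any path can be shortened to a duplicate-free path. -/
lemma exists_nodup_path (p : List V) (hp : IsPathFrom E r n p) :
    ∃ q : List V, IsPathFrom E r n q ∧ q.Nodup := by
  classical
  suffices H : ∀ L : ℕ, ∀ p : List V, p.length = L → IsPathFrom E r n p →
      ∃ q : List V, IsPathFrom E r n q ∧ q.Nodup from H p.length p rfl hp
  intro L
  induction L using Nat.strong_induction_on with
  | _ L ih =>
  intro p hL hp
  by_cases hnd : p.Nodup
  · exact ⟨p, hp, hnd⟩
  · obtain ⟨x, hx⟩ := List.exists_duplicate_iff_not_nodup.mpr hnd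
    have hcnt : 2 ≤ p.count x := List.duplicate_iff_two_le_count.mp hx
    obtain ⟨u0, w, huw⟩ := List.append_of_mem hx.mem
    -- pick a decomposition p = u ++ x :: (c ++ x :: d)
    have hdecomp : ∃ u c d : List V, p = u ++ x :: (c ++ x :: d) := by
      rw [huw, List.count_append, List.count_cons_self] at hcnt
      have hor : x ∈ u0 ∨ x ∈ w := by
        rcases Nat.lt_or_ge (u0.count x) 1 with h1 | h1
        · right; exact List.count_pos_iff.mp (by omega)
        · left; exact List.count_pos_iff.mp h1
      rcases hor with h | h
      · obtain ⟨a, b, hab⟩ := List.append_of_mem h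
        exact ⟨a, b, w, by rw [huw, hab]; simp⟩
      · obtain ⟨c, d, hcd⟩ := List.append_of_mem h
        exact ⟨u0, c, d, by rw [huw, hcd]⟩
    obtain ⟨u, c, d, hpe⟩ := hdecomp
    obtain ⟨hc, hh, hl⟩ := hp
    have hpe' : p = (u ++ x :: c) ++ (x :: d) := by simp [hpe]
    rw [hpe', List.Chain', List.isChain_append] at hc
    obtain ⟨hc1, hc2, _⟩ := hc
    have hpre : List.Chain' E (u ++ [x]) := hc1.prefix ⟨c, by simp⟩
    rw [List.Chain', List.isChain_append] at hpre
    have hq : IsPathFrom E r n (u ++ x :: d) := by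
      refine ⟨?_, ?_, ?_⟩
      · rw [List.Chain', List.isChain_append]
        refine ⟨hpre.1, hc2, ?_⟩
        intro a ha y hy
        simp only [List.head?_cons, Option.mem_def, Option.some.injEq] at hy
        subst hy
        exact hpre.2.2 a ha x (by simp)
      · rw [hpe] at hh
        rw [List.head?_append] at hh ⊢
        simpa using hh
      · rw [hpe'] at hl
        rw [List.getLast?_append] at hl ⊢
        rcases hlast : (x :: d).getLast? with _ | z
        · exact absurd hlast (by simp)
        · rw [hlast] at hl
          simpa using hl
    have hlen : (u ++ x :: d).length < L := by
      rw [← hL, hpe]; simp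
    exact ih _ hlen _ rfl hq

lemma prefix_path {u w : List V} {m : V}
    (hp : IsPathFrom E r n (u ++ m :: w)) : IsPathFrom E r m (u ++ [m]) := by
  obtain ⟨hc, hh, _⟩ := hp
  refine ⟨hc.prefix ⟨w, by simp⟩, ?_, ?_⟩
  · rw [List.head?_append] at hh ⊢
    simpa using hh
  · simp [List.getLast?_append]

/-- The entry node dominates everything. -/
lemma root_mem_path {p : List V} (hp : IsPathFrom E r n p) : r ∈ p := by
  obtain ⟨_, hh, _⟩ := hp
  exact List.mem_of_mem_head? (by simp [hh])

/-- Key ordering lemma: on a duplicate-free path to `n`, any strict dominator of `n`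
occurring strictly before `m` strictly dominates `m`. -/
lemma sdom_of_before {u w : List V} {m m' : V}
    (hnd : (u ++ m :: w).Nodup) (hp : IsPathFrom E r n (u ++ m :: w))
    (hmn : m ≠ n) (hm' : m' ∈ u) (hd : Dominates E r m' n) :
    StrictDom E r m' m := by
  obtain ⟨hc, hh, hl⟩ := hp
  have hdisj := (List.nodup_append'.mp hnd).2.2
  have hmw : m' ∉ m :: w := fun hmem => hdisj hm' hmem
  constructor
  · intro hEq; exact hmw (hEq ▸ List.mem_cons_self)
  · intro q hq
    have hwne : w ≠ [] := by
      intro hw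
      subst hw
      rw [List.getLast?_append] at hl
      simp at hl
      exact hmn hl
    obtain ⟨hqc, hqh, hql⟩ := hq
    have hqne : q ≠ [] := by intro h; subst h; simp at hqh
    -- p = (u ++ [m]) ++ w
    have hpe : u ++ m :: w = (u ++ [m]) ++ w := by simp
    rw [hpe, List.Chain', List.isChain_append] at hc
    obtain ⟨_, hcw, hjunc⟩ := hc
    have hqw : IsPathFrom E r n (q ++ w) := by
      refine ⟨?_, ?_, ?_⟩
      · rw [List.Chain', List.isChain_append]
        refine ⟨hqc, hcw, ?_⟩
        intro a ha y hy
        rw [hql] at ha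
        simp only [Option.mem_def, Option.some.injEq] at ha
        subst ha
        exact hjunc m (by simp [List.getLast?_append]) y hy
      · rw [List.head?_append, hqh]; rfl
      · rw [List.getLast?_append]
        rw [hpe, List.getLast?_append] at hl
        rcases hlw : w.getLast? with _ | z
        · exact absurd (List.getLast?_eq_none_iff.mp hlw) hwne
        · rw [hlw] at hl; simpa using hl
    have := hd _ hqw
    rw [List.mem_append] at this
    rcases this with h | h
    · exact h
    · exact absurd (List.mem_cons_of_mem m h) hmw

end Aux

section Aux2

variable {E : V → V → Prop} {r : V}

lemma sdom_asymm {a b : V} (hb : Reachable E r b)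
    (hab : StrictDom E r a b) (hba : StrictDom E r b a) : False := by
  obtain ⟨q0, hq0⟩ := hb
  obtain ⟨q, hq, hnd⟩ := exists_nodup_path q0 hq0
  have haq : a ∈ q := hab.2 q hq
  obtain ⟨u, w, hdec⟩ := List.append_of_mem haq
  subst hdec
  have hpref : IsPathFrom E r a (u ++ [a]) := prefix_path hq
  have hbmem : b ∈ u ++ [a] := hba.2 _ hpref
  have hbu : b ∈ u := by
    rcases List.mem_append.mp hbmem with h | h
    · exact h
    · simp at h; exact absurd h hba.1
  have hdisj := (List.nodup_append'.mp hnd).2.2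
  -- b is the last element, hence in a :: w
  have hlast : (a :: w).getLast? = some b := by
    have hl := hq.2.2
    rw [List.getLast?_append] at hl
    rcases h : (a :: w).getLast? with _ | z
    · exact absurd h (by simp)
    · rw [h] at hl; simpa using hl
  have hbaw : b ∈ a :: w := by
    have : (a :: w).getLast (List.cons_ne_nil a w) = b := by
      rwa [List.getLast?_eq_getLast (by simp), Option.some_inj] at hlast
    exact this ▸ List.getLast_mem _
  exact hdisj hbu hbaw

end Aux2

/-- Every non-entry node has a unique immediate dominator. -/
theorem immediate_dominator_exists_unique (E : V → V → Prop) (r : V)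
    (hreach : ∀ x : V, Reachable E r x)
    (hpred : ∀ n : V, n ≠ r → ∃ m : V, E m n ∧ Reachable E r m)
    (n : V) (hn : n ≠ r) :
    ∃! m : V, ImmDom E r m n := by
  classical
  obtain ⟨p0, hp0⟩ := hreach n
  obtain ⟨p, hp, hnd⟩ := exists_nodup_path p0 hp0
  have hpne : p ≠ [] := by
    intro h; subst h; exact absurd hp.2.1 (by simp)
  set P : ℕ → Prop := fun i => ∃ h : i < p.length, StrictDom E r p[i] n with hP
  have hP0 : P 0 := by
    refine ⟨List.length_pos_iff.mpr hpne, ?_⟩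
    have h0 : p[0]'(List.length_pos_iff.mpr hpne) = r := by
      have hh := hp.2.1
      rw [List.head?_eq_head hpne, Option.some_inj] at hh
      rw [List.getElem_zero]; exact hh
    rw [h0]
    exact ⟨fun h => hn h.symm, fun q hq => root_mem_path hq⟩
  set i₀ := Nat.findGreatest P p.length with hi₀def
  obtain ⟨hi₀, hsd⟩ : P i₀ := Nat.findGreatest_spec (Nat.zero_le _) hP0
  set m := p[i₀] with hm
  have himm : ∀ m' : V, StrictDom E r m' n → m' ≠ m → StrictDom E r m' m := by
    intro m' hm' hne
    have hmem : m' ∈ p := hm'.2 p hp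
    obtain ⟨j, hj, hjm⟩ := List.getElem_of_mem hmem
    have hPj : P j := ⟨hj, hjm ▸ hm'⟩
    have hji : j ≤ i₀ := Nat.le_findGreatest (le_of_lt hj) hPj
    have hjne : j ≠ i₀ := by
      intro h; subst h; exact hne (hm.trans hjm).symm
    have hjlt : j < i₀ := lt_of_le_of_ne hji hjne
    have hdec : p = p.take i₀ ++ p[i₀] :: p.drop (i₀ + 1) := by
      rw [← List.drop_eq_getElem_cons hi₀, List.take_append_drop]
    have hmtake : m' ∈ p.take i₀ := by
      have hjt : j < (p.take i₀).length := by
        rw [List.length_take]; omega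
      have : (p.take i₀)[j] = m' := by rw [List.getElem_take]; exact hjm
      exact this ▸ List.getElem_mem hjt
    exact sdom_of_before (hdec ▸ hnd) (hdec ▸ hp) hsd.1 hmtake hm'.2
  refine ⟨m, ⟨hsd, himm⟩, ?_⟩
  intro y hy
  by_contra hne
  have h1 : StrictDom E r y m := himm y hy.1 hne
  have h2 : StrictDom E r m y := hy.2 m hsd (fun h => hne h.symm)
  exact sdom_asymm (hreach m) h1 h2
end

section
/- Suppose the cut-point sequence c₁, …, c_n of a def-use pair (l_d, l_u, v) is given, where l_d and l_u occur in the sequence and no node of the sequence after l_d redefines v. If a path p from the entry passes through c₁, …, c_n in succession and no node of p strictly between its visits to l_d and l_u redefines v, then p covers the def-use pair with a def-clear subpath; i.e., the pair is covered by p. -/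
variable {V : Type*}

/-- A path covers the def-use pair \`(ld, lu, v)\` with a def-clear subpath:
it visits \`ld\`, then \`lu\`, and no node strictly in between redefines \`v\`. -/
def CoversDC (Redef : V → Prop) (p : List V) (ld lu : V) : Prop :=
  ∃ p₁ mid p₂ : List V, p = p₁ ++ ld :: (mid ++ lu :: p₂) ∧ ∀ x ∈ mid, ¬ Redef x

lemma pair_sublist_split {a b : V} :
    ∀ p : List V, List.Sublist [a, b] p →
      ∃ p₁ mid p₂ : List V, p = p₁ ++ a :: (mid ++ b :: p₂) := by
  intro p
  induction p with
  | nil => intro h; exact absurd (List.eq_nil_of_sublist_nil h) (by simp)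
  | cons x xs ih =>
    intro h
    cases h with
    | cons _ h' =>
      obtain ⟨p₁, mid, p₂, rfl⟩ := ih h'
      exact ⟨x :: p₁, mid, p₂, rfl⟩
    | cons_cons _ h' =>
      have hb : b ∈ xs := h'.subset (by simp)
      obtain ⟨mid, p₂, rfl⟩ := List.append_of_mem hb
      exact ⟨[], mid, p₂, rfl⟩

/-- Sufficiency: if a path from the entry passes through the cut-point sequence
(which contains `ld` and ends at `lu`, with no cut point after `ld` redefining
`v`) in succession, and no node of the path strictly between its visits to
`ld` and `lu` redefines `v`, then the path covers the pair def-clear. -/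
theorem cut_points_sufficient (E : V → V → Prop) (r ld lu : V)
    (Redef : V → Prop) (cs₁ cs₂ : List V)
    (hcsClear : ∀ x ∈ cs₂, ¬ Redef x)
    (p : List V) (hchain : p.Chain' E) (hhead : p.head? = some r)
    (hsucc : List.Sublist (cs₁ ++ ld :: (cs₂ ++ [lu])) p)
    (hbetween : ∀ p₁ mid p₂ : List V,
      p = p₁ ++ ld :: (mid ++ lu :: p₂) → ∀ x ∈ mid, ¬ Redef x) :
    CoversDC Redef p ld lu := by
  have hpair : List.Sublist [ld, lu] p := by
    refine List.Sublist.trans ?_ hsucc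
    have h1 : List.Sublist [ld, lu] (ld :: (cs₂ ++ [lu])) := by
      refine List.cons_sublist_cons.mpr ?_
      simpa using (List.nil_sublist cs₂).append (List.Sublist.refl [lu])
    exact h1.trans (List.sublist_append_right cs₁ _)
  obtain ⟨p₁, mid, p₂, rfl⟩ := pair_sublist_split p hpair
  exact ⟨p₁, mid, p₂, rfl, hbetween p₁ mid p₂ rfl⟩
end

section
/- Soundness of the instrumentation encoding: in the instrumented transition system where a Boolean flag cover_flag is set to true at l_d, set to false at every node redefining v, and tested at l_u, the state (l_u, cover_flag = true) is reachable from the initial state if and only if the def-use pair (l_d, l_u, v) is feasible in the original control-flow graph. -/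
variable {V : Type*}

/-- One step of the instrumented transition system over (node, flag):
transitions follow edges; upon executing the source node, the flag becomes
\`true\` after \`ld\`, \`false\` after a redefinition, and is unchanged otherwise. -/
def Step [DecidableEq V] (E : V → V → Prop) (ld : V) (Redef : V → Prop)
    [DecidablePred Redef] : V × Bool → V × Bool → Prop :=
  fun s t => E s.1 t.1 ∧
    t.2 = (if s.1 = ld then true else if Redef s.1 then false else s.2)

def flagStep [DecidableEq V] (ld : V) (Redef : V → Prop) [DecidablePred Redef] :
    Bool → V → Bool :=
  fun b x => if x = ld then true else if Redef x then false else b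

lemma foldl_flag_true [DecidableEq V] (ld : V) (Redef : V → Prop) [DecidablePred Redef]
    (mid : List V) (h : ∀ x ∈ mid, ¬ Redef x) :
    mid.foldl (flagStep ld Redef) true = true := by
  induction mid with
  | nil => rfl
  | cons a t ih =>
    have ha : ¬ Redef a := h a (by simp)
    simp only [List.foldl_cons]
    have : flagStep ld Redef true a = true := by
      simp [flagStep, ha]
    rw [this]
    exact ih (fun x hx => h x (by simp [hx]))

lemma run_of_chain [DecidableEq V] (E : V → V → Prop) (ld : V) (Redef : V → Prop)
    [DecidablePred Redef] (p : List V) (r n : V)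
    (hc : p.Chain' E) (hh : p.head? = some r) (hl : p.getLast? = some n) :
    Relation.ReflTransGen (Step E ld Redef) (r, false)
      (n, p.dropLast.foldl (flagStep ld Redef) false) := by
  induction p using List.reverseRecOn generalizing n with
  | nil => simp at hh
  | append_singleton q x ih =>
    rcases eq_or_ne q [] with rfl | hq
    · have hh2 : x = r := by simpa using hh
      have hl2 : x = n := by simpa using hl
      subst hh2; subst hl2
      exact Relation.ReflTransGen.refl
    · have hl' : x = n := by simpa using hl
      subst hl'
      change List.IsChain E (q ++ [x]) at hc
      rw [List.isChain_append] at hc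
      obtain ⟨hcq, -, hE⟩ := hc
      have hql : q.getLast? = some (q.getLast hq) := List.getLast?_eq_getLast (l := q) hq
      have hh' : q.head? = some r := by
        rwa [List.head?_append_of_ne_nil _ hq] at hh
      have ih' := ih (q.getLast hq) hcq hh' hql
      have hEx : E (q.getLast hq) x := hE _ hql x rfl
      have hdrop : (q ++ [x]).dropLast = q := List.dropLast_concat ..
      rw [hdrop]
      have hqsplit : q.dropLast ++ [q.getLast hq] = q := List.dropLast_append_getLast hq
      have hfold : q.foldl (flagStep ld Redef) false =
          flagStep ld Redef (q.dropLast.foldl (flagStep ld Redef) false) (q.getLast hq) := by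
        conv_lhs => rw [← hqsplit]
        simp [List.foldl_append]
      rw [hfold]
      exact ih'.tail ⟨hEx, rfl⟩

lemma decomp_of_flag [DecidableEq V] (ld : V) (Redef : V → Prop) [DecidablePred Redef]
    (L : List V) (h : L.foldl (flagStep ld Redef) false = true) :
    ∃ L₁ L₂ : List V, L = L₁ ++ ld :: L₂ ∧ ∀ x ∈ L₂, ¬ Redef x := by
  induction L using List.reverseRecOn with
  | nil => simp at h
  | append_singleton M x ih =>
    rw [List.foldl_append, List.foldl_cons, List.foldl_nil] at h
    by_cases hx : x = ld
    · exact ⟨M, [], by simp [hx], by simp⟩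
    · by_cases hR : Redef x
      · simp [flagStep, hx, hR] at h
      · have h' : M.foldl (flagStep ld Redef) false = true := by
          simpa [flagStep, hx, hR] using h
        obtain ⟨L₁, L₂, rfl, hclear⟩ := ih h'
        refine ⟨L₁, L₂ ++ [x], by simp, ?_⟩
        intro y hy
        rcases List.mem_append.1 hy with hy | hy
        · exact hclear y hy
        · simp at hy; subst hy; exact hR

lemma path_of_run [DecidableEq V] (E : V → V → Prop) (ld : V) (Redef : V → Prop)
    [DecidablePred Redef] (r : V) (s : V × Bool)
    (h : Relation.ReflTransGen (Step E ld Redef) (r, false) s) :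
    ∃ p : List V, p.Chain' E ∧ p.head? = some r ∧ p.getLast? = some s.1 ∧
      p.dropLast.foldl (flagStep ld Redef) false = s.2 := by
  induction h with
  | refl => exact ⟨[r], List.isChain_singleton r, rfl, rfl, rfl⟩
  | @tail b c hab hbc ih =>
    obtain ⟨p, hc, hh, hl, hf⟩ := ih
    have hp : p ≠ [] := by rintro rfl; simp at hh
    refine ⟨p ++ [c.1], ?_, ?_, ?_, ?_⟩
    · change List.IsChain E (p ++ [c.1])
      rw [List.isChain_append]
      refine ⟨hc, List.isChain_singleton _, ?_⟩
      intro a ha y hy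
      rw [hl] at ha
      simp at ha hy
      subst ha; subst hy
      exact hbc.1
    · rwa [List.head?_append_of_ne_nil _ hp]
    · simp
    · rw [List.dropLast_concat]
      have hps : p.dropLast ++ [p.getLast hp] = p := List.dropLast_append_getLast hp
      have hlast : p.getLast hp = b.1 := by
        have := List.getLast?_eq_getLast (l := p) hp
        rw [hl] at this
        exact (Option.some_injective _ this.symm)
      conv_lhs => rw [← hps]
      rw [List.foldl_append, List.foldl_cons, List.foldl_nil, hf, hlast]
      exact (by simpa [flagStep] using hbc.2.symm)

/-- Soundness of the instrumentation encoding: the state `(lu, true)` is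
reachable from `(r, false)` iff the def-use pair `(ld, lu, v)` is feasible. -/
theorem instrumentation_sound [DecidableEq V] (E : V → V → Prop) (r ld lu : V)
    (Redef : V → Prop) [DecidablePred Redef]
    (hld : ¬ Redef ld) (hne : lu ≠ ld) :
    Relation.ReflTransGen (Step E ld Redef) (r, false) (lu, true) ↔
      ∃ p : List V, p.Chain' E ∧ p.head? = some r ∧ CoversDC Redef p ld lu := by
  constructor
  · intro h
    obtain ⟨p, hc, hh, hl, hf⟩ := path_of_run E ld Redef r (lu, true) h
    have hp : p ≠ [] := by rintro rfl; simp at hh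
    obtain ⟨L₁, L₂, hdec, hclear⟩ := decomp_of_flag ld Redef p.dropLast hf
    have hlast : p.getLast hp = lu := by
      have := List.getLast?_eq_getLast (l := p) hp
      rw [hl] at this
      exact (Option.some_injective _ this.symm)
    have hsplit : p = p.dropLast ++ [lu] := by
      conv_lhs => rw [← List.dropLast_append_getLast hp]
      rw [hlast]
    refine ⟨p, hc, hh, L₁, L₂, [], ?_, hclear⟩
    rw [hsplit, hdec]
    simp only [List.append_assoc, List.cons_append, List.nil_append]
  · rintro ⟨p, hc, hh, p₁, mid, p₂, hdec, hclear⟩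
    set q : List V := p₁ ++ ld :: (mid ++ [lu]) with hqdef
    have hpq : p = q ++ p₂ := by rw [hdec]; simp [hqdef]
    have hq : q ≠ [] := by simp [hqdef]
    rw [hpq] at hc hh
    have hcq : q.Chain' E := (List.isChain_append.mp hc).1
    have hhq : q.head? = some r := by rwa [List.head?_append_of_ne_nil _ hq] at hh
    have hq2 : q = (p₁ ++ ld :: mid) ++ [lu] := by simp [hqdef]
    have hlq : q.getLast? = some lu := by rw [hq2, List.getLast?_concat]
    have hrun := run_of_chain E ld Redef q r lu hcq hhq hlq
    have hdrop : q.dropLast = p₁ ++ ld :: mid := by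
      rw [hq2, List.dropLast_concat]
    have hfold : q.dropLast.foldl (flagStep ld Redef) false = true := by
      rw [hdrop, List.foldl_append, List.foldl_cons]
      have : flagStep ld Redef (p₁.foldl (flagStep ld Redef) false) ld = true := by
        simp [flagStep]
      rw [this]
      exact foldl_flag_true ld Redef mid hclear
    rwa [hfold] at hrun
end

section
/- In the instrumented transition system, along any execution, the flag b is true at a state (n, true) exactly when the most recent visit to l_d occurred after the most recent visit to any redefinition node; formally, for any finite execution trace ending in state (n, true), the trace contains a visit to l_d after which no Redef node occurs. -/
variable {V : Type*}

/-- Flag invariant: any finite execution trace from `(r, false)` ending in a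
state with flag `true` contains a visit to `ld` after which no redefinition
node is executed (every node executed afterwards, i.e. every state after that
visit except the final not-yet-executed one, is not a redefinition). -/
theorem flag_invariant [DecidableEq V] (E : V → V → Prop) (r ld : V)
    (Redef : V → Prop) [DecidablePred Redef] (hld : ¬ Redef ld)
    (n : V) (tr : List (V × Bool))
    (hchain : tr.Chain' (Step E ld Redef))
    (hhead : tr.head? = some (r, false))
    (hlast : tr.getLast? = some (n, true)) :
    ∃ (tr₁ : List (V × Bool)) (s : V × Bool) (tr₂ : List (V × Bool)),
      tr = tr₁ ++ s :: tr₂ ∧ s.1 = ld ∧ ∀ t ∈ tr₂.dropLast, ¬ Redef t.1 := by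
  induction tr using List.reverseRecOn generalizing n with
  | nil => simp at hlast
  | append_singleton tr' b ih =>
    have hb : b = (n, true) := by simpa using hlast
    subst hb
    rcases eq_or_ne tr' [] with hnil | hne
    · subst hnil; simp at hhead
    · obtain ⟨s, hlast'⟩ : ∃ s, tr'.getLast? = some s :=
        ⟨tr'.getLast hne, List.getLast?_eq_getLast _⟩
      replace hchain := List.isChain_append.mp hchain
      have hc1 := hchain.1
      obtain ⟨hE, hflag⟩ := hchain.2.2 s (by simpa using hlast') (n, true) (by simp)
      have hhead' : tr'.head? = some (r, false) := by
        rw [List.head?_append] at hhead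
        rcases h : tr'.head? with _ | v
        · exact absurd (List.head?_eq_none_iff.mp h) hne
        · rw [h] at hhead; simpa using hhead
      by_cases hld' : s.1 = ld
      · refine ⟨tr'.dropLast, s, [(n, true)], ?_, hld', by simp⟩
        conv_lhs => rw [← List.dropLast_append_getLast hne]
        have : tr'.getLast hne = s := by
          rw [List.getLast?_eq_getLast hne] at hlast'
          exact Option.some.inj hlast'
        rw [this]; simp
      · by_cases hR : Redef s.1
        · rw [if_neg hld', if_pos hR] at hflag
          simp at hflag
        · rw [if_neg hld', if_neg hR] at hflag
          have hs2 : (s.1, true) = s := by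
            rw [show true = s.2 by simpa using hflag]
          obtain ⟨tr₁, s', tr₂, heq, hs', hall⟩ :=
            ih s.1 hc1 hhead' (by rw [hlast', hs2])
          refine ⟨tr₁, s', tr₂ ++ [(n, true)], by rw [heq]; simp, hs', ?_⟩
          intro t ht
          rw [List.dropLast_concat] at ht
          have htr2 : tr₂ ≠ [] := by
            rintro rfl
            rw [heq, List.getLast?_append_of_ne_nil tr₁ (l₂ := [s']) (by simp)] at hlast'
            simp at hlast'
            exact hld' (hlast' ▸ hs')
          have hlast2 : tr₂.getLast? = some s := by
            rw [heq, List.getLast?_append_of_ne_nil tr₁ (l₂ := s' :: tr₂) (by simp),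
              show s' :: tr₂ = [s'] ++ tr₂ from rfl,
              List.getLast?_append_of_ne_nil [s'] (l₂ := tr₂) htr2] at hlast'
            exact hlast'
          rw [← List.dropLast_append_getLast htr2] at ht
          rcases List.mem_append.mp ht with h | h
          · exact hall t h
          · have : t = s := by
              rw [List.getLast?_eq_getLast htr2] at hlast2
              simpa [Option.some.inj hlast2] using h
            rw [this]; exact hR
end

section
/- If c₁, …, c_n are the cut points of a def-use pair with c₁ ≫ᴵ c₂ ≫ᴵ … ≫ᴵ c_n forming an immediate-dominator chain ending at l_u, then any path from the entry r to l_u visits c₁, …, c_n and the order of their first occurrences on the path respects the chain order: the first occurrence of c_i precedes the first occurrence of c_{i+1}. -/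
variable {V : Type*}

lemma indexOf_lt_of_mem_take [DecidableEq V] {a : V} :
    ∀ {l : List V} {n : ℕ}, a ∈ l.take n → l.idxOf a < n := by
  intro l
  induction l with
  | nil => intro n h; simp at h
  | cons b l ih =>
    intro n h
    cases n with
    | zero => simp at h
    | succ n =>
      simp only [List.take_succ_cons, List.mem_cons] at h
      by_cases hab : a = b
      · subst hab; simp
      · rcases h with h | h
        · exact absurd h hab
        · rw [List.idxOf_cons_ne _ (fun h => hab h.symm)]
          exact Nat.succ_lt_succ (ih h)

lemma prefix_isPathFrom [DecidableEq V] {E : V → V → Prop} {r m b : V} {p : List V}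
    (hp : IsPathFrom E r m p) (hb : b ∈ p) :
    IsPathFrom E r b (p.take (p.idxOf b + 1)) := by
  obtain ⟨hc, hh, _⟩ := hp
  have hlt : p.idxOf b < p.length := List.idxOf_lt_length_iff.2 hb
  refine ⟨hc.prefix (List.take_prefix _ _), ?_, ?_⟩
  · cases p with
    | nil => simp at hh
    | cons x xs => simpa using hh
  · have hlen : (p.take (p.idxOf b + 1)).length = p.idxOf b + 1 := by
      rw [List.length_take]; omega
    rw [List.getLast?_eq_getElem?, hlen]
    simp only [Nat.add_sub_cancel]
    rw [List.getElem?_take, if_pos (Nat.lt_succ_self _)]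
    rw [List.getElem?_eq_getElem hlt, List.getElem_idxOf hlt]

lemma strictDom_order [DecidableEq V] {E : V → V → Prop} {r m a b : V} {p : List V}
    (hd : StrictDom E r a b) (hp : IsPathFrom E r m p) (hb : b ∈ p) :
    a ∈ p ∧ p.idxOf a < p.idxOf b := by
  have hq := prefix_isPathFrom hp hb
  have ha : a ∈ p.take (p.idxOf b + 1) := hd.2 _ hq
  have hlt : p.idxOf b < p.length := List.idxOf_lt_length_iff.2 hb
  have hsplit : p.take (p.idxOf b + 1) = p.take (p.idxOf b) ++ [b] := by
    rw [List.take_succ, List.getElem?_eq_getElem hlt, List.getElem_idxOf hlt]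
    rfl
  rw [hsplit, List.mem_append, List.mem_singleton] at ha
  rcases ha with ha | ha
  · exact ⟨List.mem_of_mem_take ha, indexOf_lt_of_mem_take ha⟩
  · exact absurd ha hd.1

/-- A chain of immediate dominators ending at `lu` is visited by every path
from the entry to `lu`, and the first occurrences respect the chain order. -/
theorem cut_point_chain_order [DecidableEq V] (E : V → V → Prop) (r lu : V)
    (hreach : ∀ x : V, Reachable E r x)
    (cs : List V) (hchain : cs.Chain' (fun a b => ImmDom E r a b))
    (hlast : cs.getLast? = some lu) :
    ∀ p : List V, IsPathFrom E r lu p →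
      (∀ c ∈ cs, c ∈ p) ∧
      cs.Chain' (fun a b => p.idxOf a < p.idxOf b) := by
  intro p hp
  induction cs with
  | nil => simp [List.Chain']
  | cons a t ih =>
    cases t with
    | nil =>
      simp only [List.getLast?_singleton, Option.some.injEq] at hlast
      subst hlast
      have : a ∈ p := by
        obtain ⟨h, rfl⟩ := List.mem_getLast?_eq_getLast (Option.mem_def.2 hp.2.2)
        exact List.getLast_mem h
      simp [this, List.Chain']
    | cons b t =>
      have hlast' : (b :: t).getLast? = some lu := by
        rw [← hlast]; simp [List.getLast?_cons_cons]
      have hchain' : (b :: t).Chain' (fun a b => ImmDom E r a b) := hchain.tail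
      obtain ⟨hmem, hord⟩ := ih hchain' hlast'
      have hab : ImmDom E r a b := (List.isChain_cons_cons.1 hchain).1
      have hb : b ∈ p := hmem b (by simp)
      obtain ⟨ha, hlt⟩ := strictDom_order hab.1 hp hb
      refine ⟨?_, ?_⟩
      · intro c hc
        rcases List.mem_cons.1 hc with rfl | hc
        · exact ha
        · exact hmem c hc
      · exact List.isChain_cons_cons.2 ⟨hlt, hord⟩
end

section
/- Redefinition path pruning is sound: if a prefix path p from the entry r has visited l_d and subsequently visited a node satisfying Redef (a redefinition of v) without yet visiting l_u and without visiting l_d again after the redefinition, then no extension of p can cover the def-use pair (l_d, l_u, v) using the occurrence of l_d in p unless l_d is visited again; in particular, if l_d cannot be reached again from the current end node of p, every extension of p fails to cover the pair. -/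
variable {V : Type*}

private lemma mid_get {α : Type*} (l₁ l₂ : List α) (a : α) :
    (l₁ ++ a :: l₂)[l₁.length]? = some a := by
  rw [List.getElem?_append_right le_rfl]; simp

private lemma index_cases {α : Type*} (l₁ l₂ : List α) (a v : α) (n : ℕ)
    (h : (l₁ ++ a :: l₂)[n]? = some v) :
    (v ∈ l₁ ∧ n < l₁.length) ∨ (n = l₁.length ∧ v = a) ∨
    (l₂[n - (l₁.length + 1)]? = some v ∧ l₁.length < n) := by
  rcases lt_trichotomy n l₁.length with h1 | h1 | h1
  · left
    rw [List.getElem?_append, if_pos h1] at h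
    exact ⟨List.mem_of_getElem? h, h1⟩
  · right; left
    subst h1
    rw [mid_get] at h
    exact ⟨rfl, (Option.some_inj.mp h).symm⟩
  · right; right
    rw [List.getElem?_append_right h1.le,
      show n - l₁.length = (n - (l₁.length + 1)) + 1 from by omega,
      List.getElem?_cons_succ] at h
    exact ⟨h, h1⟩

/-- Soundness of redefinition path pruning: if a prefix path from the entry
has visited `ld` (its unique visit so far), then a redefinition node, without
visiting `lu` in between or afterwards and without visiting `ld` again after
the redefinition, then every extension of the path that does not visit `ld`
again fails to cover the pair `(ld, lu, v)`. -/
theorem redefinition_pruning_sound (E : V → V → Prop) (r ld lu : V)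
    (Redef : V → Prop) (hne : lu ≠ ld) (hldnr : ¬ Redef ld)
    (p₁ mid p₂ : List V) (x : V) (hx : Redef x)
    (hld₁ : ld ∉ p₁) (hluMid : lu ∉ mid) (hluAfter : lu ∉ x :: p₂)
    (hldAfter : ld ∉ p₂)
    (hchain : (p₁ ++ ld :: (mid ++ x :: p₂)).Chain' E)
    (hhead : (p₁ ++ ld :: (mid ++ x :: p₂)).head? = some r) :
    ∀ s : List V, ((p₁ ++ ld :: (mid ++ x :: p₂)) ++ s).Chain' E → ld ∉ s →
      ¬ CoversDC Redef ((p₁ ++ ld :: (mid ++ x :: p₂)) ++ s) ld lu := by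
  intro s _ hlds hcov
  obtain ⟨q₁, m, q₂, hq, hm⟩ := hcov
  have hq' : q₁ ++ ld :: (m ++ lu :: q₂) = p₁ ++ ld :: (mid ++ x :: (p₂ ++ s)) := by
    rw [← hq]; simp
  set i := q₁.length with hi
  set a := p₁.length with ha
  set k := p₁.length + 1 + mid.length with hk
  set j := q₁.length + 1 + m.length with hj
  -- position of the decomposition's ld
  have h_ld : (p₁ ++ ld :: (mid ++ x :: (p₂ ++ s)))[i]? = some ld := by
    rw [← hq']; exact mid_get q₁ _ ld
  have hik : a ≤ i ∧ i < k := by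
    rcases index_cases p₁ _ ld ld i h_ld with ⟨hmem, _⟩ | ⟨h1, _⟩ | ⟨h2, hia⟩
    · exact absurd hmem hld₁
    · omega
    · rcases index_cases mid _ x ld _ h2 with ⟨_, hlt⟩ | ⟨_, heq⟩ | ⟨h3, _⟩
      · omega
      · exact absurd (heq ▸ hx) hldnr
      · rcases List.mem_append.mp (List.mem_of_getElem? h3) with h | h
        · exact absurd h hldAfter
        · exact absurd h hlds
  -- position of the decomposition's lu
  have h_lu : (p₁ ++ ld :: (mid ++ x :: (p₂ ++ s)))[j]? = some lu := by
    rw [← hq', List.getElem?_append_right (by omega : q₁.length ≤ j),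
      show j - q₁.length = m.length + 1 from by omega, List.getElem?_cons_succ]
    exact mid_get m q₂ lu
  have hkj : k < j := by
    rcases index_cases p₁ _ ld lu j h_lu with ⟨_, hjlt⟩ | ⟨h1, _⟩ | ⟨h2, _⟩
    · omega
    · omega
    · rcases index_cases mid _ x lu _ h2 with ⟨hmem, _⟩ | ⟨_, heq⟩ | ⟨_, hlt⟩
      · exact absurd hmem hluMid
      · exact absurd (heq ▸ (List.mem_cons_self (a := x) (l := p₂))) hluAfter
      · omega
  -- x sits strictly between, hence in m
  have hxm : (q₁ ++ ld :: (m ++ lu :: q₂))[k]? = some x := by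
    rw [hq', List.getElem?_append_right (by omega : p₁.length ≤ k),
      show k - p₁.length = mid.length + 1 from by omega, List.getElem?_cons_succ]
    exact mid_get mid _ x
  rw [List.getElem?_append_right (by omega : q₁.length ≤ k),
    show k - q₁.length = (k - q₁.length - 1) + 1 from by omega,
    List.getElem?_cons_succ,
    List.getElem?_append, if_pos (by omega : k - q₁.length - 1 < m.length)] at hxm
  exact hm x (List.mem_of_getElem? hxm) hx
end
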